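/- Let G be a loopless multigraph with finite vertex set V and edges e_1, …, e_m, where each e_i is an unordered pair {u_i, v_i} of distinct vertices (parallel edges allowed). Let G' be the simple graph on the vertex set V ⊎ {w_1, z_1, …, w_m, z_m} (two fresh vertices per edge) whose edges are, for each i ∈ {1,…,m}: {u_i, w_i}, {w_i, z_i} and {z_i, v_i}. Then for every natural number k: G has a cut of size at least k if and only if G' has a cut of size at least 2m + k. -/

import Mathlib

open Finset

/-- The size of the cut determined by `S` in the multigraph with edge family `E`:
the number of edge indices whose edge has exactly one endpoint in `S`. -/
def cutEdges {α : Type*} [DecidableEq α] {ι : Type*} [Fintype ι]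
    (E : ι → α × α) (S : Finset α) : ℕ :=
  (Finset.univ.filter fun i =>
    ((E i).1 ∈ S ∧ (E i).2 ∉ S) ∨ ((E i).1 ∉ S ∧ (E i).2 ∈ S)).card

/-- The edge family of the graph `G'` obtained from the multigraph with edges
`e_i = {u_i, v_i}` by replacing each edge `e_i` by the path
`u_i — w_i — z_i — v_i` with two fresh internal vertices `w_i = (i, false)` and
`z_i = (i, true)`. -/
def subdivEdges {V : Type*} {m : ℕ} (E : Fin m → V × V) :
    Fin m × Fin 3 → (V ⊕ (Fin m × Bool)) × (V ⊕ (Fin m × Bool)) := fun p =>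
  ![((Sum.inl (E p.1).1 : V ⊕ (Fin m × Bool)), Sum.inr (p.1, false)),
    ((Sum.inr (p.1, false) : V ⊕ (Fin m × Bool)), Sum.inr (p.1, true)),
    ((Sum.inr (p.1, true) : V ⊕ (Fin m × Bool)), Sum.inl (E p.1).2)] p.2

def cnt (P Q : Prop) [Decidable P] [Decidable Q] : ℕ :=
  if (P ∧ ¬Q) ∨ (¬P ∧ Q) then 1 else 0

lemma cutEdges_eq_sum {α : Type*} [DecidableEq α] {ι : Type*} [Fintype ι]
    (E : ι → α × α) (S : Finset α) :
    cutEdges E S = ∑ i, cnt ((E i).1 ∈ S) ((E i).2 ∈ S) := by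
  rw [cutEdges, Finset.card_filter]
  simp [cnt]

lemma cut_subdiv {V : Type*} [DecidableEq V] {m : ℕ} (E : Fin m → V × V)
    (S' : Finset (V ⊕ (Fin m × Bool))) :
    cutEdges (subdivEdges E) S' =
    ∑ i : Fin m,
      (cnt (Sum.inl (E i).1 ∈ S') (Sum.inr (i, false) ∈ S')
       + cnt (Sum.inr (i, false) ∈ S') (Sum.inr (i, true) ∈ S')
       + cnt (Sum.inr (i, true) ∈ S') (Sum.inl (E i).2 ∈ S')) := by
  rw [cutEdges, Finset.card_filter, Fintype.sum_prod_type]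
  refine Finset.sum_congr rfl fun i _ => ?_
  rw [Fin.sum_univ_three]
  simp [subdivEdges, cnt, add_assoc]
  congr

lemma cnt_path_le (a b c d : Prop) [Decidable a] [Decidable b] [Decidable c] [Decidable d] :
    cnt a b + cnt b c + cnt c d ≤ 2 + cnt a d := by
  unfold cnt
  by_cases a <;> by_cases b <;> by_cases c <;> by_cases d <;> simp_all

lemma cnt_path_eq (a d : Prop) [Decidable a] [Decidable d] :
    cnt a (¬a) + cnt (¬a) a + cnt a d = 2 + cnt a d := by
  unfold cnt
  by_cases a <;> by_cases d <;> simp_all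

/-- Replacing every edge of a loopless multigraph `G` by a path of length three (through
two fresh vertices) yields a simple graph `G'` such that, for every `k`, `G` has a cut of
size at least `k` iff `G'` has a cut of size at least `2m + k`. -/
theorem gap_multigraph_maxcut_to_gap_maxcut
    {V : Type*} [Fintype V] [DecidableEq V] {m : ℕ}
    (E : Fin m → V × V) (hloop : ∀ i, (E i).1 ≠ (E i).2) (k : ℕ) :
    (∃ S : Finset V, k ≤ cutEdges E S) ↔
    (∃ S' : Finset (V ⊕ (Fin m × Bool)), 2 * m + k ≤ cutEdges (subdivEdges E) S') := by
  constructor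
  · rintro ⟨S, hS⟩
    set T : Finset (V ⊕ (Fin m × Bool)) := Finset.univ.filter fun x =>
      Sum.elim (fun v => decide (v ∈ S)) (fun p => p.2 == decide ((E p.1).1 ∈ S)) x = true with hT
    refine ⟨T, ?_⟩
    rw [cut_subdiv]
    have hkey : ∀ i : Fin m,
        (cnt (Sum.inl (E i).1 ∈ T) (Sum.inr (i, false) ∈ T)
         + cnt (Sum.inr (i, false) ∈ T) (Sum.inr (i, true) ∈ T)
         + cnt (Sum.inr (i, true) ∈ T) (Sum.inl (E i).2 ∈ T)) =
        2 + cnt ((E i).1 ∈ S) ((E i).2 ∈ S) := by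
      intro i
      by_cases h1 : (E i).1 ∈ S <;> by_cases h2 : (E i).2 ∈ S <;>
        simp [hT, cnt, h1, h2]
    rw [Finset.sum_congr rfl fun i _ => hkey i, Finset.sum_add_distrib,
      Finset.sum_const, ← cutEdges_eq_sum]
    simp only [card_univ, Fintype.card_fin, smul_eq_mul]
    omega
  · rintro ⟨S', hS'⟩
    refine ⟨Finset.univ.filter fun v => Sum.inl v ∈ S', ?_⟩
    rw [cut_subdiv] at hS'
    have hle : ∑ i : Fin m,
        (cnt (Sum.inl (E i).1 ∈ S') (Sum.inr (i, false) ∈ S')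
         + cnt (Sum.inr (i, false) ∈ S') (Sum.inr (i, true) ∈ S')
         + cnt (Sum.inr (i, true) ∈ S') (Sum.inl (E i).2 ∈ S')) ≤
        ∑ i : Fin m, (2 + cnt (Sum.inl (E i).1 ∈ S') (Sum.inl (E i).2 ∈ S')) :=
      Finset.sum_le_sum fun i _ => cnt_path_le _ _ _ _
    have heq : cutEdges E (Finset.univ.filter fun v => Sum.inl v ∈ S') =
        ∑ i : Fin m, cnt (Sum.inl (E i).1 ∈ S') (Sum.inl (E i).2 ∈ S') := by
      rw [cutEdges_eq_sum]
      refine Finset.sum_congr rfl fun i _ => ?_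
      simp [cnt]
    have h2 : ∑ i : Fin m, (2 + cnt (Sum.inl (E i).1 ∈ S') (Sum.inl (E i).2 ∈ S')) =
        2 * m + cutEdges E (Finset.univ.filter fun v => Sum.inl v ∈ S') := by
      rw [Finset.sum_add_distrib, Finset.sum_const, heq]
      simp [mul_comm]
    omega
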